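/- If x̄ is a critical point of the n-dimensional Rosenbrock function P (for n ≥ 2, α > 0), then x̄_n = x̄_{n-1}², and the vector σ̄ with σ̄_i = α(x̄_i² − x̄_{i+1}) satisfies σ̄_{n-1} = 0 and, whenever σ̄_i + 1 ≠ 0, x̄_i = (σ̄_{i-1} + 2)/(2(σ̄_i + 1)) (with the convention σ̄_0 = 0). -/

import Mathlib

noncomputable def rosenbrock (m : ℕ) (α : ℝ) (x : Fin (m+1) → ℝ) : ℝ :=
  ∑ i : Fin m, ((x i.castSucc - 1)^2 + α/2 * (x i.succ - (x i.castSucc)^2)^2)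

/-- The backward shift σ_{i-1}, with the convention σ_0 = 0. -/
noncomputable def spre (m : ℕ) (σ : Fin m → ℝ) (i : Fin m) : ℝ :=
  if h : 0 < (i : ℕ) then σ ⟨(i : ℕ) - 1, by have := i.isLt; omega⟩ else 0

open ContinuousLinearMap in
lemma rosen_deriv (m : ℕ) (α : ℝ) (xbar : Fin (m+1) → ℝ) :
    HasFDerivAt (rosenbrock m α)
      (∑ i : Fin m,
        ((xbar i.castSucc - 1) • proj (R := ℝ) (φ := fun _ : Fin (m+1) => ℝ) i.castSucc
          + (xbar i.castSucc - 1) • proj (R := ℝ) (φ := fun _ : Fin (m+1) => ℝ) i.castSucc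
          + (α/2) • ((xbar i.succ - xbar i.castSucc * xbar i.castSucc) •
              (proj (R := ℝ) (φ := fun _ : Fin (m+1) => ℝ) i.succ
                - (xbar i.castSucc • proj (R := ℝ) (φ := fun _ : Fin (m+1) => ℝ) i.castSucc
                  + xbar i.castSucc • proj (R := ℝ) (φ := fun _ : Fin (m+1) => ℝ) i.castSucc))
            + (xbar i.succ - xbar i.castSucc * xbar i.castSucc) •
              (proj (R := ℝ) (φ := fun _ : Fin (m+1) => ℝ) i.succ
                - (xbar i.castSucc • proj (R := ℝ) (φ := fun _ : Fin (m+1) => ℝ) i.castSucc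
                  + xbar i.castSucc • proj (R := ℝ) (φ := fun _ : Fin (m+1) => ℝ) i.castSucc))))) xbar := by
  unfold rosenbrock
  simp only [pow_two]
  apply HasFDerivAt.fun_sum
  intro i _
  have hc : HasFDerivAt (fun x : Fin (m+1) → ℝ => x i.castSucc)
      (proj (R := ℝ) (φ := fun _ : Fin (m+1) => ℝ) i.castSucc) xbar :=
    (proj (R := ℝ) (φ := fun _ : Fin (m+1) => ℝ) i.castSucc).hasFDerivAt
  have hs : HasFDerivAt (fun x : Fin (m+1) → ℝ => x i.succ)
      (proj (R := ℝ) (φ := fun _ : Fin (m+1) => ℝ) i.succ) xbar :=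
    (proj (R := ℝ) (φ := fun _ : Fin (m+1) => ℝ) i.succ).hasFDerivAt
  exact (((hc.sub_const 1).mul (hc.sub_const 1)).add
    (((hs.sub (hc.mul hc)).mul (hs.sub (hc.mul hc))).const_mul (α/2)))

lemma rosen_key (m : ℕ) (α : ℝ) (xbar : Fin (m+1) → ℝ)
    (hcrit : fderiv ℝ (rosenbrock m α) xbar = 0) (j : Fin (m+1)) :
    ∑ i : Fin m,
      ((2*(xbar i.castSucc - 1) - 2*α*(xbar i.castSucc)*(xbar i.succ - (xbar i.castSucc)^2))
          * (if i.castSucc = j then (1:ℝ) else 0)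
        + α*(xbar i.succ - (xbar i.castSucc)^2) * (if i.succ = j then (1:ℝ) else 0)) = 0 := by
  have hL := rosen_deriv m α xbar
  have h0 : _ = (0 : (Fin (m+1) → ℝ) →L[ℝ] ℝ) := hL.fderiv.symm.trans hcrit
  have h1 := congrArg (fun L : (Fin (m+1) → ℝ) →L[ℝ] ℝ => L (Pi.single j 1)) h0
  simp only [ContinuousLinearMap.sum_apply, ContinuousLinearMap.add_apply,
    ContinuousLinearMap.smul_apply, ContinuousLinearMap.sub_apply,
    ContinuousLinearMap.proj_apply, ContinuousLinearMap.zero_apply, Pi.single_apply,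
    smul_eq_mul] at h1
  refine Eq.trans ?_ h1
  apply Finset.sum_congr rfl
  intro i _
  split_ifs <;> ring

theorem critical_point_analytic_form (m : ℕ) (hm : 1 ≤ m) (α : ℝ) (hα : 0 < α)
    (xbar : Fin (m+1) → ℝ) (hcrit : fderiv ℝ (rosenbrock m α) xbar = 0) :
    xbar (Fin.last m) = (xbar ⟨m - 1, by omega⟩)^2 ∧
    (fun i : Fin m => α * ((xbar i.castSucc)^2 - xbar i.succ)) ⟨m - 1, by omega⟩ = 0 ∧
    ∀ i : Fin m,
      α * ((xbar i.castSucc)^2 - xbar i.succ) + 1 ≠ 0 →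
      xbar i.castSucc =
        (spre m (fun j => α * ((xbar j.castSucc)^2 - xbar j.succ)) i + 2) /
          (2 * (α * ((xbar i.castSucc)^2 - xbar i.succ) + 1)) := by
  have hαne : α ≠ 0 := ne_of_gt hα
  have hlast : xbar (Fin.last m) = (xbar ((⟨m - 1, by omega⟩ : Fin m).castSucc))^2 := by
    have h1 := rosen_key m α xbar hcrit (Fin.last m)
    rw [Finset.sum_eq_single (⟨m-1, by omega⟩ : Fin m)] at h1
    · have hcs : ¬ ((⟨m-1, by omega⟩ : Fin m).castSucc = Fin.last m) := by
        simp [Fin.ext_iff]; omega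
      have hss : ((⟨m-1, by omega⟩ : Fin m).succ = Fin.last m) := by
        simp [Fin.ext_iff]; omega
      rw [hss, if_neg hcs, if_pos rfl] at h1
      have h2 : α * (xbar (Fin.last m) - (xbar ((⟨m-1, by omega⟩ : Fin m).castSucc))^2) = 0 := by
        linarith
      have h3 := (mul_eq_zero.mp h2).resolve_left hαne
      linarith
    · intro b _ hb
      have h1 : ¬ b.castSucc = Fin.last m := (Fin.castSucc_lt_last b).ne
      have h2 : ¬ b.succ = Fin.last m := by
        have hb' : (b:ℕ) ≠ m - 1 := fun hh => hb (Fin.ext hh)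
        intro hq
        have h2 := congrArg Fin.val hq
        simp only [Fin.val_succ, Fin.val_last] at h2
        omega
      rw [if_neg h1, if_neg h2]; ring
    · simp
  refine ⟨hlast, ?_, ?_⟩
  · have hss : ((⟨m-1, by omega⟩ : Fin m).succ = Fin.last m) := by
      simp [Fin.ext_iff]; omega
    simp only [hss, hlast]
    ring
  · intro i hne
    have h := rosen_key m α xbar hcrit i.castSucc
    rw [Finset.sum_add_distrib] at h
    have hA : ∑ k : Fin m,
        ((2*(xbar k.castSucc - 1) - 2*α*(xbar k.castSucc)*(xbar k.succ - (xbar k.castSucc)^2))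
          * (if k.castSucc = i.castSucc then (1:ℝ) else 0))
        = 2*(xbar i.castSucc - 1) - 2*α*(xbar i.castSucc)*(xbar i.succ - (xbar i.castSucc)^2) := by
      simp only [Fin.castSucc_inj, mul_ite, mul_one, mul_zero]
      rw [Finset.sum_ite_eq' Finset.univ i]
      simp
    have hd : (2:ℝ) * (α * ((xbar i.castSucc)^2 - xbar i.succ) + 1) ≠ 0 := by
      intro hz; apply hne; linarith
    rw [eq_div_iff hd]
    by_cases hi : 0 < (i : ℕ)
    · have hk : ∑ k : Fin m,
          (α*(xbar k.succ - (xbar k.castSucc)^2) * (if k.succ = i.castSucc then (1:ℝ) else 0))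
          = α*(xbar (⟨(i:ℕ)-1, by have := i.isLt; omega⟩ : Fin m).succ
              - (xbar (⟨(i:ℕ)-1, by have := i.isLt; omega⟩ : Fin m).castSucc)^2) := by
        rw [Finset.sum_eq_single (⟨(i:ℕ)-1, by have := i.isLt; omega⟩ : Fin m)]
        · rw [if_pos (by simp [Fin.ext_iff]; omega)]; ring
        · intro b _ hb
          rw [if_neg]; ring
          have hb' : (b:ℕ) ≠ (i:ℕ) - 1 := fun hh => hb (Fin.ext hh)
          intro hq
          have h2 := congrArg Fin.val hq
          simp only [Fin.val_succ, Fin.coe_castSucc] at h2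
          omega
        · simp
      rw [hA, hk] at h
      unfold spre
      rw [dif_pos hi]
      linear_combination h
    · have hk : ∑ k : Fin m,
          (α*(xbar k.succ - (xbar k.castSucc)^2) * (if k.succ = i.castSucc then (1:ℝ) else 0)) = 0 := by
        apply Finset.sum_eq_zero
        intro b _
        rw [if_neg]; ring
        intro hq
        have h2 := congrArg Fin.val hq
        simp only [Fin.val_succ, Fin.coe_castSucc] at h2
        omega
      rw [hA, hk] at h
      unfold spre
      rw [dif_neg hi]
      linear_combination h
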